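/- Let G = ⟨x, y | x^k = y^m = 1, y^x = y^n⟩ with gcd(m, n−1) = 1, m dividing (n^k − 1)/(n − 1), and k prime. Then G belongs to C₃ (∑_{H ⊴ G} |H| ≤ 2|G|) if and only if σ(m) ≤ km. -/

import Mathlib

private lemma subgroup_eq_of_le_of_card_le' {G : Type*} [Group G] [Finite G]
    {H K : Subgroup G} (h : H ≤ K) (hc : Nat.card K ≤ Nat.card H) : H = K := by
  apply SetLike.ext'
  apply Set.eq_of_subset_of_ncard_le h _ (Set.toFinite _)
  rwa [← Nat.card_coe_set_eq, ← Nat.card_coe_set_eq]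

private lemma mem_normalizer_of_conj_mem' {G : Type*} [Group G] [Finite G] (g : G)
    (H : Subgroup G) (hH : ∀ a ∈ H, g * a * g⁻¹ ∈ H) : g ∈ Subgroup.normalizer (H : Set G) := by
  have hmap : Subgroup.map (MulAut.conj g).toMonoidHom H = H := by
    apply subgroup_eq_of_le_of_card_le'
    · rintro b ⟨a, ha, rfl⟩
      simpa using hH a ha
    · exact le_of_eq (Nat.card_congr
        (Subgroup.equivMapOfInjective H (MulAut.conj g).toMonoidHom
          (MulAut.conj g).injective).toEquiv)
  rw [Subgroup.mem_normalizer_iff]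
  intro a
  constructor
  · intro ha; exact hH a ha
  · intro ha
    rw [← hmap] at ha
    obtain ⟨b, hb, hba⟩ := ha
    simp only [MulEquiv.coe_toMonoidHom, MulAut.conj_apply] at hba
    rwa [← mul_left_cancel (mul_right_cancel hba)]

/-- The sum of the orders of all normal subgroups of `G`. -/
noncomputable def normalSum (G : Type*) [Group G] : ℕ :=
  ∑ᶠ (H : Subgroup G) (_ : H.Normal), Nat.card H

theorem metacyclic_mem_C3_iff (k m n : ℕ) (hk : k.Prime)
    (hgcd : Nat.gcd m (n - 1) = 1) (hdvd : m ∣ (n ^ k - 1) / (n - 1))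
    (G : Type*) [Group G] [Finite G] (x y : G)
    (hgen : Subgroup.closure {x, y} = ⊤)
    (hx : x ^ k = 1) (hy : orderOf y = m)
    (hconj : x * y * x⁻¹ = y ^ n)
    (hcard : Nat.card G = k * m) :
    normalSum G ≤ 2 * Nat.card G ↔ (∑ d ∈ m.divisors, d) ≤ k * m := by
  classical
  have hm0 : m ≠ 0 := by rw [← hy]; exact (orderOf_pos y).ne'
  set Y := Subgroup.zpowers y with hYdef
  have hcardY : Nat.card Y = m := by rw [Nat.card_zpowers, hy]
  -- conjugation by x on powers of y
  have hconjzpow : ∀ j : ℤ, x * y ^ j * x⁻¹ = (y ^ j) ^ n := by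
    intro j
    have h1 : x * y ^ j * x⁻¹ = (y ^ n) ^ j := by
      simpa [MulAut.conj_apply, hconj] using map_zpow (MulAut.conj x) y j
    rw [h1, ← zpow_natCast y n, ← zpow_mul, mul_comm, zpow_mul, zpow_natCast]
  have hconjmem : ∀ (H : Subgroup G), H ≤ Y → ∀ a ∈ H, x * a * x⁻¹ ∈ H := by
    intro H hHY a ha
    obtain ⟨j, hj⟩ := hHY ha
    replace hj : y ^ j = a := hj
    rw [← hj, hconjzpow]
    exact pow_mem (hj ▸ ha) n
  have hcomm : ∀ a ∈ Y, ∀ b ∈ Y, b * a * b⁻¹ = a := by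
    rintro a ⟨i, rfl⟩ b ⟨j, rfl⟩
    show y ^ j * y ^ i * (y ^ j)⁻¹ = y ^ i
    group
  -- every subgroup below Y is normal
  have hsub_normal : ∀ H : Subgroup G, H ≤ Y → H.Normal := by
    intro H hHY
    rw [← Subgroup.normalizer_eq_top_iff, eq_top_iff, ← hgen]
    rw [Subgroup.closure_le]
    intro g hg
    simp only [Set.mem_insert_iff, Set.mem_singleton_iff] at hg
    rcases hg with h | h <;> rw [h]
    · exact mem_normalizer_of_conj_mem' x H (hconjmem H hHY)
    · refine mem_normalizer_of_conj_mem' y H (fun a ha => ?_)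
      rw [hcomm a (hHY ha) y (Subgroup.mem_zpowers y)]
      exact ha
  have hYnormal : Y.Normal := hsub_normal Y le_rfl
  -- classification of normal subgroups
  have hclass : ∀ H : Subgroup G, H.Normal ↔ (H = ⊤ ∨ H ≤ Y) := by
    intro H
    constructor
    · intro hN
      by_cases hle : H ≤ Y
      · exact Or.inr hle
      left
      have hcardQ : Nat.card (G ⧸ Y) = k := by
        have h1 := Subgroup.card_eq_card_quotient_mul_card_subgroup Y
        rw [hcard, hcardY] at h1
        exact (Nat.eq_of_mul_eq_mul_right (Nat.pos_of_ne_zero hm0) h1.symm)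
      haveI : Fact (Nat.card (G ⧸ Y)).Prime := ⟨hcardQ ▸ hk⟩
      obtain hbot | htop :=
        Subgroup.eq_bot_or_eq_top_of_prime_card (Subgroup.map (QuotientGroup.mk' Y) H)
      · exact absurd (by rwa [Subgroup.map_eq_bot_iff, QuotientGroup.ker_mk'] at hbot) hle
      · have hxmem : (QuotientGroup.mk' Y) x ∈ Subgroup.map (QuotientGroup.mk' Y) H :=
          htop ▸ Subgroup.mem_top _
        obtain ⟨h, hhH, hhx⟩ := hxmem
        have hxy : x⁻¹ * h ∈ Y := by
          rw [← QuotientGroup.eq]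
          exact hhx.symm
        obtain ⟨j, hj⟩ := hxy
        replace hj : y ^ j = x⁻¹ * h := hj
        have hh : h = x * y ^ j := by rw [hj]; group
        have hyc : h * y * h⁻¹ = y ^ (n : ℤ) := by
          have h2 : h * y * h⁻¹ = x * (y ^ j * y * (y ^ j)⁻¹) * x⁻¹ := by rw [hh]; group
          rw [h2, hcomm y (Subgroup.mem_zpowers y) (y ^ j) (zpow_mem (Subgroup.mem_zpowers y) j),
            ← zpow_one y, hconjzpow, ← zpow_natCast, ← zpow_mul, one_mul]
        have hcm : y ^ ((n : ℤ) - 1) ∈ H := by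
          have h3 : h * (y * h⁻¹ * y⁻¹) ∈ H :=
            mul_mem hhH (hN.conj_mem h⁻¹ (inv_mem hhH) y)
          have h4 : h * (y * h⁻¹ * y⁻¹) = y ^ ((n : ℤ) - 1) := by
            rw [zpow_sub, zpow_one, ← hyc]; group
          rwa [h4] at h3
        have hyH : y ∈ H := by
          rcases eq_or_ne m 1 with hm1 | hm1
          · have : y = 1 := orderOf_eq_one_iff.mp (by rw [hy, hm1])
            rw [this]; exact one_mem H
          · have hn2 : 2 ≤ n := by
              by_contra hn
              have : n - 1 = 0 := by omega
              rw [this, Nat.gcd_zero_right] at hgcd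
              exact hm1 hgcd
            have hpm : y ^ (n - 1) ∈ H := by
              have : ((n : ℤ) - 1) = ((n - 1 : ℕ) : ℤ) := by
                rw [Nat.cast_sub (by omega)]; norm_num
              rw [this, zpow_natCast] at hcm
              exact hcm
            have hZeq : Subgroup.zpowers (y ^ (n - 1)) = Y := by
              apply subgroup_eq_of_le_of_card_le'
              · rw [Subgroup.zpowers_le]
                exact pow_mem (Subgroup.mem_zpowers y) _
              · rw [hcardY, Nat.card_zpowers, orderOf_pow, hy, hgcd, Nat.div_one]
            have : y ∈ Subgroup.zpowers (y ^ (n - 1)) := hZeq ▸ Subgroup.mem_zpowers y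
            exact Subgroup.zpowers_le.mpr hpm this
        have hxH : x ∈ H := by
          have hxeq : x = h * (y ^ j)⁻¹ := by rw [hh]; group
          rw [hxeq]
          exact mul_mem hhH (inv_mem (zpow_mem hyH j))
        rw [eq_top_iff, ← hgen, Subgroup.closure_le]
        intro g hg
        simp only [Set.mem_insert_iff, Set.mem_singleton_iff] at hg
        rcases hg with h' | h' <;> rw [h']
        exacts [hxH, hyH]
    · rintro (rfl | hle)
      · exact inferInstance
      · exact hsub_normal H hle
  -- finiteness of the subgroup lattice
  haveI : Finite (Subgroup G) :=
    Finite.of_injective (fun H : Subgroup G => (H : Set G)) SetLike.coe_injective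
  haveI : Fintype (Subgroup G) := Fintype.ofFinite _
  have hns : normalSum G =
      ∑ H ∈ Finset.univ.filter (fun H : Subgroup G => H.Normal), Nat.card H := by
    rw [normalSum, finsum_eq_sum_of_fintype, Finset.sum_filter]
    exact Finset.sum_congr rfl (fun H _ => finsum_eq_if)
  have htopY : ¬ (⊤ : Subgroup G) ≤ Y := by
    intro hle
    have h5 := Subgroup.card_le_of_le hle
    rw [Subgroup.card_top, hcardY, hcard] at h5
    have : 2 ≤ k := hk.two_le
    nlinarith [Nat.pos_of_ne_zero hm0]
  have hfilter : Finset.univ.filter (fun H : Subgroup G => H.Normal) =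
      insert ⊤ (Finset.univ.filter (fun H : Subgroup G => H ≤ Y)) := by
    ext H
    simp [hclass H]
  have hcardK : ∀ d, d ∣ m → d ≠ 0 →
      Nat.card (Subgroup.zpowers (y ^ (m / d))) = d := by
    intro d hd hd0
    rw [Nat.card_zpowers, orderOf_pow, hy, Nat.gcd_eq_right (Nat.div_dvd_of_dvd hd),
      Nat.div_div_self hd hm0]
  have huniq : ∀ H : Subgroup G, H ≤ Y →
      Subgroup.zpowers (y ^ (m / Nat.card H)) = H := by
    intro H hHY
    have hd0 : Nat.card H ≠ 0 := Nat.card_pos.ne'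
    have hdm : Nat.card H ∣ m := hcardY ▸ Subgroup.card_dvd_of_le hHY
    set d := Nat.card H with hddef
    have hle : H ≤ Subgroup.zpowers (y ^ (m / d)) := by
      intro g hg
      obtain ⟨j, hj⟩ := hHY hg
      replace hj : y ^ j = g := hj
      have hgd : g ^ d = 1 := by
        have h6 : (⟨g, hg⟩ : H) ^ d = 1 := pow_card_eq_one'
        simpa using congrArg Subtype.val h6
      have hdivd : (m : ℤ) ∣ j * d := by
        rw [← hy]
        apply orderOf_dvd_iff_zpow_eq_one.mpr
        rw [zpow_mul, hj, zpow_natCast, hgd]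
      obtain ⟨c, hc⟩ := hdivd
      have hmd : (m : ℤ) = ((m / d : ℕ) : ℤ) * d := by
        exact_mod_cast (Nat.div_mul_cancel hdm).symm
      have hjc : j = ((m / d : ℕ) : ℤ) * c := by
        have h7 : j * d = (((m / d : ℕ) : ℤ) * c) * d := by
          rw [hc, hmd]; ring
        exact mul_right_cancel₀ (by exact_mod_cast hd0) h7
      refine ⟨c, ?_⟩
      show (y ^ (m / d)) ^ c = g
      rw [← zpow_natCast y (m / d), ← zpow_mul, ← hjc, hj]
    exact (subgroup_eq_of_le_of_card_le' hle (le_of_eq (hcardK d hdm hd0))).symm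
  have hsum2 : ∑ H ∈ Finset.univ.filter (fun H : Subgroup G => H ≤ Y), Nat.card H =
      ∑ d ∈ m.divisors, d := by
    refine Finset.sum_nbij' (fun H => Nat.card H)
      (fun d => Subgroup.zpowers (y ^ (m / d))) ?_ ?_ ?_ ?_ ?_
    · intro H hH
      rw [Finset.mem_filter] at hH
      exact Nat.mem_divisors.mpr ⟨hcardY ▸ Subgroup.card_dvd_of_le hH.2, hm0⟩
    · intro d hd
      rw [Finset.mem_filter]
      exact ⟨Finset.mem_univ _, Subgroup.zpowers_le.mpr (pow_mem (Subgroup.mem_zpowers y) _)⟩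
    · intro H hH
      rw [Finset.mem_filter] at hH
      exact huniq H hH.2
    · intro d hd
      exact hcardK d (Nat.mem_divisors.mp hd).1 (Nat.pos_of_mem_divisors hd).ne'
    · intro H _
      rfl
  have hnsval : normalSum G = k * m + ∑ d ∈ m.divisors, d := by
    rw [hns, hfilter, Finset.sum_insert (by simpa using htopY), Subgroup.card_top, hcard, hsum2]
  rw [hnsval, hcard]
  omega
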